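/- arXiv:2605.24386 — 4 statements merged into one kernel-verified Lean document; each statement's English description precedes it below -/
import Mathlib

section
/- For T₁, T₂ > 0 with T/2 = T₁T₂, the convolution of the logistic density ℓ_{T₁} with the function r(p) = 1_{p≥0} − 1_{p<0}, evaluated at p/T₂, equals tanh(p/T). -/
open MeasureTheory Filter Set Real

/-- The logistic density: ℓ_T(p) = e^{p/T}/(T(e^{p/T}+1)²). -/
noncomputable def logisticDen (T p : ℝ) : ℝ :=
  Real.exp (p / T) / (T * (Real.exp (p / T) + 1) ^ 2)

/-- The sign-like function r(p) = 1_{p≥0} − 1_{p<0}. -/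
noncomputable def signFn (p : ℝ) : ℝ := if 0 ≤ p then 1 else -1

section aux
variable {c : ℝ}

lemma logF_hasDerivAt (hc : 0 < c) (y : ℝ) :
    HasDerivAt (fun y => Real.exp (y / c) / (Real.exp (y / c) + 1)) (logisticDen c y) y := by
  have h1 : HasDerivAt (fun y : ℝ => Real.exp (y / c)) (Real.exp (y / c) / c) y := by
    simpa [div_eq_mul_inv] using ((hasDerivAt_id y).div_const c).exp
  have h2 : HasDerivAt (fun y : ℝ => Real.exp (y / c) + 1) (Real.exp (y / c) / c) y :=
    h1.add_const 1
  have hne : Real.exp (y / c) + 1 ≠ 0 := by positivity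
  have := h1.div h2 hne
  refine this.congr_deriv ?_
  unfold logisticDen
  field_simp
  ring

lemma logF_tendsto_top (hc : 0 < c) :
    Tendsto (fun y => Real.exp (y / c) / (Real.exp (y / c) + 1)) atTop (nhds 1) := by
  have h : ∀ y : ℝ, Real.exp (y / c) / (Real.exp (y / c) + 1)
      = 1 - (Real.exp (y / c) + 1)⁻¹ := by
    intro y
    have hne : Real.exp (y / c) + 1 ≠ 0 := by positivity
    field_simp
    ring
  simp only [h]
  have hdiv : Tendsto (fun y : ℝ => y / c) atTop atTop :=
    tendsto_id.atTop_div_const hc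
  have : Tendsto (fun y : ℝ => (Real.exp (y / c) + 1)⁻¹) atTop (nhds 0) :=
    ((Real.tendsto_exp_atTop.comp hdiv).atTop_add tendsto_const_nhds).inv_tendsto_atTop
  simpa using tendsto_const_nhds.sub this

lemma logF_tendsto_bot (hc : 0 < c) :
    Tendsto (fun y => Real.exp (y / c) / (Real.exp (y / c) + 1)) atBot (nhds 0) := by
  have hdiv : Tendsto (fun y : ℝ => y / c) atBot atBot :=
    tendsto_id.atBot_div_const hc
  have he : Tendsto (fun y : ℝ => Real.exp (y / c)) atBot (nhds 0) :=
    Real.tendsto_exp_atBot.comp hdiv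
  have := he.div (he.add (tendsto_const_nhds (x := (1:ℝ)))) (by norm_num)
  simpa [Pi.div_def] using this

lemma logisticDen_nonneg (hc : 0 < c) (y : ℝ) : 0 ≤ logisticDen c y := by
  unfold logisticDen; positivity

lemma logisticDen_even (hc : 0 < c) (y : ℝ) : logisticDen c (-y) = logisticDen c y := by
  unfold logisticDen
  have h : Real.exp (-y / c) = (Real.exp (y / c))⁻¹ := by
    rw [← Real.exp_neg]; ring_nf
  rw [h]
  have he : Real.exp (y / c) ≠ 0 := (Real.exp_pos _).ne'
  field_simp
  ring

lemma logisticDen_integrableOn_Ioi (hc : 0 < c) (a : ℝ) :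
    IntegrableOn (logisticDen c) (Ioi a) := by
  exact integrableOn_Ioi_deriv_of_nonneg' (fun x _ => logF_hasDerivAt hc x)
    (fun x _ => logisticDen_nonneg hc x) (logF_tendsto_top hc)

lemma logisticDen_integrableOn_Iic (hc : 0 < c) (a : ℝ) :
    IntegrableOn (logisticDen c) (Iic a) := by
  have h1 : IntegrableOn (logisticDen c) (Ici (-a)) := by
    rw [integrableOn_Ici_iff_integrableOn_Ioi]
    exact logisticDen_integrableOn_Ioi hc (-a)
  have h2 : IntegrableOn (fun y => logisticDen c (-y)) (Iic a) := by
    have := (MeasurePreserving.integrableOn_comp_preimage (Measure.measurePreserving_neg _)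
      (Homeomorph.neg ℝ).measurableEmbedding).2 h1
    simpa [Function.comp_def, neg_preimage, neg_Ici] using this
  exact h2.congr_fun (fun y _ => logisticDen_even hc y) measurableSet_Iic

end aux

/-- (ℓ_{T₁} * r)(p/T₂) = tanh(p/T) where T/2 = T₁T₂. -/
theorem logistic_conv_sign_eq_tanh (T₁ T₂ T : ℝ) (h1 : 0 < T₁) (h2 : 0 < T₂)
    (hT : T / 2 = T₁ * T₂) (p : ℝ) :
    (∫ y : ℝ, logisticDen T₁ y * signFn (p / T₂ - y)) = Real.tanh (p / T) := by
  set x := p / T₂ with hx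
  set F : ℝ → ℝ := fun y => Real.exp (y / T₁) / (Real.exp (y / T₁) + 1) with hF
  have hIic : IntegrableOn (logisticDen T₁) (Iic x) := logisticDen_integrableOn_Iic h1 x
  have hIoi : IntegrableOn (logisticDen T₁) (Ioi x) := logisticDen_integrableOn_Ioi h1 x
  have hfIic : IntegrableOn (fun y => logisticDen T₁ y * signFn (x - y)) (Iic x) := by
    apply hIic.congr_fun _ measurableSet_Iic
    intro y hy
    simp only [signFn, if_pos (by simp at hy; linarith : (0:ℝ) ≤ x - y), mul_one]
  have hfIoi : IntegrableOn (fun y => logisticDen T₁ y * signFn (x - y)) (Ioi x) := by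
    have hneg : IntegrableOn (fun y => -(logisticDen T₁ y)) (Ioi x) := hIoi.neg
    apply hneg.congr_fun _ measurableSet_Ioi
    intro y hy
    simp only [signFn, if_neg (by simp at hy; intro h; linarith : ¬ (0:ℝ) ≤ x - y)]
    ring
  have hsplit : (∫ y : ℝ, logisticDen T₁ y * signFn (x - y))
      = (∫ y in Iic x, logisticDen T₁ y * signFn (x - y))
        + ∫ y in Ioi x, logisticDen T₁ y * signFn (x - y) :=
    (intervalIntegral.integral_Iic_add_Ioi hfIic hfIoi).symm
  have e1 : (∫ y in Iic x, logisticDen T₁ y * signFn (x - y)) = ∫ y in Iic x, logisticDen T₁ y := by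
    apply setIntegral_congr_fun measurableSet_Iic
    intro y hy
    simp only [signFn, if_pos (by simp at hy; linarith : (0:ℝ) ≤ x - y), mul_one]
  have e2 : (∫ y in Ioi x, logisticDen T₁ y * signFn (x - y))
      = ∫ y in Ioi x, -logisticDen T₁ y := by
    apply setIntegral_congr_fun measurableSet_Ioi
    intro y hy
    simp only [signFn, if_neg (by simp at hy; intro h; linarith : ¬ (0:ℝ) ≤ x - y)]
    ring
  have v1 : (∫ y in Iic x, logisticDen T₁ y) = F x - 0 :=
    integral_Iic_of_hasDerivAt_of_tendsto' (fun y _ => logF_hasDerivAt h1 y) hIic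
      (logF_tendsto_bot h1)
  have v2 : (∫ y in Ioi x, logisticDen T₁ y) = 1 - F x :=
    integral_Ioi_of_hasDerivAt_of_tendsto' (fun y _ => logF_hasDerivAt h1 y) hIoi
      (logF_tendsto_top h1)
  rw [hsplit, e1, e2, integral_neg, v1, v2]
  -- now algebra: F x - 0 - (1 - F x) = tanh (p / T)
  have hTval : T = 2 * (T₁ * T₂) := by linarith
  have hpT : p / T = x / (2 * T₁) := by
    rw [hTval, hx, div_div]
    congr 1
    ring
  rw [hpT, Real.tanh_eq_sinh_div_cosh, Real.sinh_eq, Real.cosh_eq, hF]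
  have hexp : Real.exp (x / T₁) = Real.exp (x / (2 * T₁)) * Real.exp (x / (2 * T₁)) := by
    rw [← Real.exp_add]
    congr 1
    field_simp
    ring
  have hexpneg : Real.exp (-(x / (2 * T₁))) = (Real.exp (x / (2 * T₁)))⁻¹ := Real.exp_neg _
  set s := Real.exp (x / (2 * T₁)) with hs
  have hspos : 0 < s := Real.exp_pos _
  rw [hexpneg]
  simp only [hexp]
  have hne : s * s + 1 ≠ 0 := by positivity
  field_simp
  ring
end

section
/- For T₁, T₂ > 0 with T = T₁T₂, the convolution of ReLU with the logistic density ℓ_{T₁}, evaluated at a/T₂ and scaled by T₂, equals the softplus function: T₂·(ReLU * ℓ_{T₁})(a/T₂) = T·ln(1 + e^{a/T}) for all real a. -/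
open MeasureTheory

lemma integral_relu_conv (T₁ x : ℝ) (h1 : 0 < T₁) :
    ∫ y : ℝ, max 0 y * logisticDen T₁ (x - y) =
      T₁ * Real.log (1 + Real.exp (x / T₁)) := by
  set g : ℝ → ℝ := fun y =>
    -(y * (Real.exp ((x - y) / T₁) / (Real.exp ((x - y) / T₁) + 1)))
      - T₁ * Real.log (1 + Real.exp ((x - y) / T₁)) with hg
  have hEpos : ∀ y : ℝ, 0 < Real.exp ((x - y) / T₁) := fun y => Real.exp_pos _
  have hderiv : ∀ y : ℝ, HasDerivAt g (y * logisticDen T₁ (x - y)) y := by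
    intro y
    have hE : HasDerivAt (fun y : ℝ => Real.exp ((x - y) / T₁))
        (Real.exp ((x - y) / T₁) * (-1 / T₁)) y := by
      have h0 : HasDerivAt (fun y : ℝ => (x - y) / T₁) (-1 / T₁) y := by
        simpa using ((hasDerivAt_id y).const_sub x).div_const T₁
      simpa using h0.exp
    have hne : Real.exp ((x - y) / T₁) + 1 ≠ 0 := by positivity
    have hσ : HasDerivAt (fun y : ℝ =>
        Real.exp ((x - y) / T₁) / (Real.exp ((x - y) / T₁) + 1))
        ((Real.exp ((x - y) / T₁) * (-1 / T₁) * (Real.exp ((x - y) / T₁) + 1)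
          - Real.exp ((x - y) / T₁) * (Real.exp ((x - y) / T₁) * (-1 / T₁)))
          / (Real.exp ((x - y) / T₁) + 1) ^ 2) y :=
      hE.div (hE.add_const 1) hne
    have hlogpos : 1 + Real.exp ((x - y) / T₁) ≠ 0 := by positivity
    have hlog : HasDerivAt (fun y : ℝ => Real.log (1 + Real.exp ((x - y) / T₁)))
        ((Real.exp ((x - y) / T₁) * (-1 / T₁)) / (1 + Real.exp ((x - y) / T₁))) y := by
      have := ((hasDerivAt_const y (1:ℝ)).add hE).log hlogpos
      simpa using this
    have hmul : HasDerivAt (fun y : ℝ =>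
        y * (Real.exp ((x - y) / T₁) / (Real.exp ((x - y) / T₁) + 1)))
        (1 * (Real.exp ((x - y) / T₁) / (Real.exp ((x - y) / T₁) + 1)) +
          y * ((Real.exp ((x - y) / T₁) * (-1 / T₁) * (Real.exp ((x - y) / T₁) + 1)
          - Real.exp ((x - y) / T₁) * (Real.exp ((x - y) / T₁) * (-1 / T₁)))
          / (Real.exp ((x - y) / T₁) + 1) ^ 2)) y :=
      (hasDerivAt_id y).mul hσ
    have h := hmul.neg.sub (hlog.const_mul T₁)
    convert h using 1
    · rfl
    · rfl
    · rfl
    unfold logisticDen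
    field_simp
    ring
  -- limits at infinity
  have hEtend : Filter.Tendsto (fun y : ℝ => Real.exp ((x - y) / T₁))
      Filter.atTop (nhds 0) := by
    apply Real.tendsto_exp_atBot.comp
    apply Filter.Tendsto.atBot_div_const h1
    have : Filter.Tendsto (fun y : ℝ => x + -y) Filter.atTop Filter.atBot :=
      Filter.tendsto_atBot_add_const_left _ x Filter.tendsto_neg_atTop_atBot
    exact this.congr (fun y => by ring)
  have hinv : Filter.Tendsto (fun y : ℝ => (Real.exp ((x - y) / T₁) + 1)⁻¹)
      Filter.atTop (nhds 1) := by
    have := (hEtend.add_const 1).inv₀ (by norm_num)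
    simpa using this
  have hdivT : Filter.Tendsto (fun y : ℝ => y / T₁) Filter.atTop Filter.atTop :=
    Filter.Tendsto.atTop_div_const h1 Filter.tendsto_id
  have h0 : Filter.Tendsto (fun z : ℝ => z * Real.exp (-z)) Filter.atTop (nhds 0) := by
    simpa using Real.tendsto_pow_mul_exp_neg_atTop_nhds_zero 1
  have hyE : Filter.Tendsto (fun y : ℝ => y * Real.exp ((x - y) / T₁))
      Filter.atTop (nhds 0) := by
    have h2' := (h0.comp hdivT).const_mul (Real.exp (x / T₁) * T₁)
    rw [mul_zero] at h2'
    convert h2' using 2 with y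
    rw [Function.comp_apply, sub_div, Real.exp_sub, Real.exp_neg]
    field_simp
  have hyσ : Filter.Tendsto (fun y : ℝ =>
      y * (Real.exp ((x - y) / T₁) / (Real.exp ((x - y) / T₁) + 1)))
      Filter.atTop (nhds 0) := by
    have := hyE.mul hinv
    rw [zero_mul] at this
    convert this using 2 with y
    rw [div_eq_mul_inv]; ring
  have hlogT : Filter.Tendsto (fun y : ℝ => T₁ * Real.log (1 + Real.exp ((x - y) / T₁)))
      Filter.atTop (nhds 0) := by
    have hl : Filter.Tendsto (fun y : ℝ => Real.log (1 + Real.exp ((x - y) / T₁)))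
        Filter.atTop (nhds (Real.log 1)) :=
      (Real.continuousAt_log one_ne_zero).tendsto.comp (by simpa using hEtend.const_add 1)
    have := hl.const_mul T₁
    simpa using this
  have hgtend : Filter.Tendsto g Filter.atTop (nhds 0) := by
    have := hyσ.neg.sub hlogT
    simpa using this
  have hnonneg : ∀ y ∈ Set.Ioi (0:ℝ), 0 ≤ y * logisticDen T₁ (x - y) := by
    intro y hy
    have : (0:ℝ) ≤ logisticDen T₁ (x - y) := by
      unfold logisticDen; positivity
    exact mul_nonneg (le_of_lt hy) this
  have key : ∫ y in Set.Ioi (0:ℝ), y * logisticDen T₁ (x - y)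
      = 0 - g 0 :=
    integral_Ioi_of_hasDerivAt_of_nonneg' (fun y _ => hderiv y) hnonneg hgtend
  have hsupp : ∀ y, y ∉ Set.Ioi (0:ℝ) → max 0 y * logisticDen T₁ (x - y) = 0 := by
    intro y hy
    rw [max_eq_left (by simpa using hy), zero_mul]
  rw [← setIntegral_eq_integral_of_forall_compl_eq_zero hsupp,
    setIntegral_congr_fun measurableSet_Ioi
      (fun y hy => by rw [max_eq_right (le_of_lt hy)]), key]
  simp [hg]

/-- T₂·(ReLU * ℓ_{T₁})(a/T₂) = T·ln(1 + e^{a/T}) with T = T₁T₂. -/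
theorem relu_conv_logistic_scaled_eq_softplus (T₁ T₂ T : ℝ) (h1 : 0 < T₁) (h2 : 0 < T₂)
    (hT : T = T₁ * T₂) (a : ℝ) :
    T₂ * ∫ y : ℝ, max 0 y * logisticDen T₁ (a / T₂ - y) =
      T * Real.log (1 + Real.exp (a / T)) := by
  rw [integral_relu_conv T₁ (a / T₂) h1]
  have : a / T₂ / T₁ = a / T := by rw [hT, div_div, mul_comm]
  rw [this, hT]; ring
end

section
/- For any T > 0, the convolution of ReLU with the logistic density ℓ_T satisfies (ReLU * ℓ_T)(a) = T·ln(1 + e^{a/T}) for all real a. -/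
open MeasureTheory Filter Real

lemma hasDerivAt_G (T a : ℝ) (hT : 0 < T) (p : ℝ) :
    HasDerivAt (fun p => -(p * (Real.exp ((a - p) / T) / (Real.exp ((a - p) / T) + 1)))
        - T * Real.log (1 + Real.exp ((a - p) / T)))
      (p * logisticDen T (a - p)) p := by
  have hTne : T ≠ 0 := hT.ne'
  set E : ℝ → ℝ := fun p => Real.exp ((a - p) / T) with hE
  have hEpos : ∀ q, 0 < E q := fun q => Real.exp_pos _
  have hEd : HasDerivAt E (E p * (-1 / T)) p := by
    have h1 : HasDerivAt (fun p : ℝ => (a - p) / T) (-1 / T) p :=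
      ((hasDerivAt_id p).const_sub a).div_const T
    exact h1.exp
  have hne : E p + 1 ≠ 0 := by positivity
  have hsig : HasDerivAt (fun p => E p / (E p + 1))
      ((E p * (-1 / T) * (E p + 1) - E p * (E p * (-1 / T))) / (E p + 1) ^ 2) p :=
    hEd.div (hEd.add_const 1) hne
  have hpsig : HasDerivAt (fun p => p * (E p / (E p + 1)))
      (1 * (E p / (E p + 1)) + p * ((E p * (-1 / T) * (E p + 1) - E p * (E p * (-1 / T))) / (E p + 1) ^ 2)) p :=
    (hasDerivAt_id p).mul hsig
  have hlog : HasDerivAt (fun p => Real.log (1 + E p))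
      ((E p * (-1 / T)) / (1 + E p)) p := by
    have : (1 : ℝ) + E p ≠ 0 := by positivity
    exact (hEd.const_add 1).log this
  have := (hpsig.neg).sub (hlog.const_mul T)
  refine this.congr_deriv ?_
  unfold logisticDen
  have h2 : (1 : ℝ) + E p ≠ 0 := by positivity
  field_simp
  ring

/-- (ReLU * ℓ_T)(a) = T·ln(1 + e^{a/T}). -/
theorem relu_conv_logistic_eq_softplus (T : ℝ) (hT : 0 < T) (a : ℝ) :
    (∫ p : ℝ, max 0 p * logisticDen T (a - p)) = T * Real.log (1 + Real.exp (a / T)) := by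
  have hTne : T ≠ 0 := hT.ne'
  set E : ℝ → ℝ := fun p => Real.exp ((a - p) / T) with hEdef
  set G : ℝ → ℝ := fun p => -(p * (E p / (E p + 1))) - T * Real.log (1 + E p) with hGdef
  -- reduce to integral over Ioi 0
  have hind : (fun p : ℝ => max 0 p * logisticDen T (a - p))
      = Set.indicator (Set.Ioi 0) (fun p => p * logisticDen T (a - p)) := by
    funext p
    by_cases hp : 0 < p
    · simp [Set.indicator_apply, hp, max_eq_right hp.le]
    · simp [Set.indicator_apply, hp, max_eq_left (not_lt.mp hp)]
  rw [hind, integral_indicator measurableSet_Ioi]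
  -- limit of G at top
  have h0 : Tendsto (fun p : ℝ => a - p) atTop atBot := by
    simpa [sub_eq_add_neg] using tendsto_atBot_add_const_left atTop a
      (tendsto_neg_atTop_atBot : Tendsto (fun x : ℝ => -x) atTop atBot)
  have hEtop : Tendsto E atTop (nhds 0) :=
    Real.tendsto_exp_atBot.comp (h0.atBot_div_const hT)
  have hpE : Tendsto (fun p => p * E p) atTop (nhds 0) := by
    have heq : ∀ p, p * E p = Real.exp (a / T) * (T * ((p / T) * Real.exp (-(p / T)))) := by
      intro p
      simp only [hEdef]
      rw [show (a - p) / T = a / T + -(p / T) by field_simp; ring, Real.exp_add]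
      field_simp
    simp only [heq]
    have h1 : Tendsto (fun x : ℝ => x * Real.exp (-x)) atTop (nhds 0) := by
      have := Real.tendsto_pow_mul_exp_neg_atTop_nhds_zero 1
      simpa using this
    have h2 : Tendsto (fun p : ℝ => p / T) atTop atTop :=
      Tendsto.atTop_div_const hT tendsto_id
    have h3 := (h1.comp h2).const_mul T
    have h4 := h3.const_mul (Real.exp (a / T))
    simpa using h4
  have hGtop : Tendsto G atTop (nhds 0) := by
    have h1 : Tendsto (fun p => p * (E p / (E p + 1))) atTop (nhds 0) := by
      have h : Tendsto (fun p => p * E p / (E p + 1)) atTop (nhds (0 / (0 + 1))) :=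
        Filter.Tendsto.div hpE (hEtop.add_const 1) (by norm_num)
      simpa [mul_div_assoc] using h
    have h2 : Tendsto (fun p => Real.log (1 + E p)) atTop (nhds 0) := by
      have := Filter.Tendsto.log (hEtop.const_add 1) (by norm_num)
      simpa using this
    have := (h1.neg).sub (h2.const_mul T)
    simpa using this
  -- apply the fundamental theorem
  have hderiv : ∀ x ∈ Set.Ioi (0 : ℝ), HasDerivAt G (x * logisticDen T (a - x)) x :=
    fun x _ => hasDerivAt_G T a hT x
  have hnonneg : ∀ x ∈ Set.Ioi (0 : ℝ), 0 ≤ x * logisticDen T (a - x) := by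
    intro x hx
    have : 0 ≤ logisticDen T (a - x) := by
      unfold logisticDen
      positivity
    exact mul_nonneg (le_of_lt hx) this
  have hcont : ContinuousWithinAt G (Set.Ici (0 : ℝ)) 0 :=
    ((hasDerivAt_G T a hT 0).continuousAt).continuousWithinAt
  have key := integral_Ioi_of_hasDerivAt_of_nonneg hcont hderiv hnonneg hGtop
  rw [key]
  have hE0 : E 0 = Real.exp (a / T) := by simp [hEdef]
  simp [hGdef, hE0]
end

section
/- The Fourier representation sech²(x) = ∫_ℝ μ(t)·e^{itx} dt holds for all real x, where μ(t) = t/(2·sinh(πt/2)). -/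
open MeasureTheory

/-- μ(t) = t/(2·sinh(πt/2)) for t ≠ 0, extended continuously by μ(0) = 1/π. -/
noncomputable def muDen (t : ℝ) : ℝ :=
  if t = 0 then 1 / Real.pi else t / (2 * Real.sinh (Real.pi * t / 2))

open Set
open scoped FourierTransform


lemma aux_sinh_lb {u : ℝ} (hu : 0 ≤ u) : u / 2 * Real.exp (u / 2) ≤ Real.sinh u := by
  have h1 : u / 2 ≤ Real.sinh (u / 2) := Real.self_le_sinh_iff.mpr (by linarith)
  have h2 : Real.exp (u / 2) ≤ 2 * Real.cosh (u / 2) := by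
    rw [Real.cosh_eq]
    have := (Real.exp_pos (-(u / 2))).le
    linarith
  have h3 : Real.sinh u = 2 * Real.sinh (u / 2) * Real.cosh (u / 2) := by
    rw [← Real.sinh_two_mul]; ring_nf
  have h4 : u / 2 * Real.exp (u / 2) ≤ Real.sinh (u / 2) * (2 * Real.cosh (u / 2)) :=
    mul_le_mul h1 h2 (Real.exp_pos _).le (by linarith [Real.sinh_nonneg_iff.mpr (by linarith : (0:ℝ) ≤ u/2)])
  linarith [h4, h3.symm ▸ le_refl (Real.sinh u)]

lemma muDen_eq_abs {t : ℝ} (ht : t ≠ 0) :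
    muDen t = |t| / (2 * Real.sinh (Real.pi * |t| / 2)) := by
  rw [muDen, if_neg ht]
  rcases lt_or_gt_of_ne ht with h | h
  · rw [abs_of_neg h, show Real.pi * -t / 2 = -(Real.pi * t / 2) by ring, Real.sinh_neg,
      mul_neg, neg_div_neg_eq]
  · rw [abs_of_pos h]

lemma muDen_nonneg (t : ℝ) : 0 ≤ muDen t := by
  rcases eq_or_ne t 0 with rfl | ht
  · rw [muDen, if_pos rfl]; positivity
  · rw [muDen_eq_abs ht]
    have h0 : 0 < |t| := abs_pos.mpr ht
    have : 0 < Real.sinh (Real.pi * |t| / 2) := Real.sinh_pos_iff.mpr (by positivity)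
    positivity

lemma muDen_le (t : ℝ) : muDen t ≤ 2 / Real.pi * Real.exp (-(Real.pi / 4 * |t|)) := by
  have hπ := Real.pi_pos
  rcases eq_or_ne t 0 with rfl | ht
  · rw [muDen, if_pos rfl]
    simp only [abs_zero, mul_zero, neg_zero, Real.exp_zero, mul_one]
    rw [div_le_div_iff₀ hπ hπ]
    nlinarith
  · have hat : 0 < |t| := abs_pos.mpr ht
    set a := Real.pi * |t| / 2 with ha_def
    have ha : 0 < a := by positivity
    have hs : a / 2 * Real.exp (a / 2) ≤ Real.sinh a := aux_sinh_lb ha.le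
    have h1 : muDen t ≤ |t| / (a * Real.exp (a / 2)) := by
      rw [muDen_eq_abs ht]
      apply div_le_div_of_nonneg_left (abs_nonneg t) (by positivity)
      nlinarith [Real.exp_pos (a / 2)]
    have h2 : |t| / (a * Real.exp (a / 2)) = 2 / Real.pi * Real.exp (-(Real.pi / 4 * |t|)) := by
      rw [show -(Real.pi / 4 * |t|) = -(a / 2) by rw [ha_def]; ring, Real.exp_neg, ha_def]
      field_simp
    linarith

lemma integrable_exp_neg_abs {c : ℝ} (hc : 0 < c) :
    Integrable (fun t : ℝ => Real.exp (-(c * |t|))) := by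
  have h1 : IntegrableOn (fun t : ℝ => Real.exp (-(c * |t|))) (Ioi 0) := by
    apply (exp_neg_integrableOn_Ioi 0 hc).congr_fun ?_ measurableSet_Ioi
    intro x hx
    simp only [abs_of_pos (show (0:ℝ) < x from hx), neg_mul]
  have h0 : IntegrableOn (fun t : ℝ => Real.exp (-(c * |t|))) (Ici 0) :=
    Iff.mpr integrableOn_Ici_iff_integrableOn_Ioi h1
  have h2 : IntegrableOn (fun t : ℝ => Real.exp (-(c * |t|))) (Iic 0) := by
    rw [← Measure.map_neg_eq_self (volume : Measure ℝ)]
    have m : MeasurableEmbedding fun x : ℝ => -x :=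
      (Homeomorph.neg ℝ).measurableEmbedding
    rw [m.integrableOn_map_iff]
    simp_rw [Function.comp_def, abs_neg, neg_preimage, neg_Iic, neg_zero]
    exact h0
  rw [← integrableOn_univ, ← Iic_union_Ioi (a := (0:ℝ))]
  exact h2.union h1

lemma muDen_measurable : Measurable muDen := by
  unfold muDen
  apply Measurable.ite (measurableSet_eq) measurable_const
  apply Measurable.div measurable_id
  exact (measurable_const.mul ((Real.continuous_sinh.measurable).comp (by fun_prop)))


lemma aux_cpow (r : ℝ) (hr : 0 < r) (s : ℂ) :
    (r : ℂ) ^ s = Complex.exp (s * (Real.log r : ℂ)) := by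
  rw [Complex.cpow_def_of_ne_zero (by exact_mod_cast hr.ne'), Complex.ofReal_log hr.le, mul_comm]

lemma key_subst (t : ℝ) :
    (∫ x : ℝ, (((1 / Real.cosh x) ^ 2 : ℝ) : ℂ) * Complex.exp (-(Complex.I * t * x)))
      = 2 * Complex.betaIntegral (1 + Complex.I * t / 2) (1 - Complex.I * t / 2) := by
  set s : ℂ := Complex.I * t / 2 with hs_def
  set F : ℝ → ℝ := fun x => (1 + Real.exp (2 * x))⁻¹ with hF_def
  set F' : ℝ → ℝ := fun x => -(2 * Real.exp (2 * x)) / (1 + Real.exp (2 * x)) ^ 2 with hF'_def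
  set G : ℝ → ℂ := fun v => (v : ℂ) ^ s * ((1 : ℂ) - (v : ℂ)) ^ (-s) with hG_def
  have hderiv : ∀ x : ℝ, HasDerivAt F (F' x) x := by
    intro x
    have h0 : HasDerivAt (fun y : ℝ => 2 * y) 2 x := by
      simpa using (hasDerivAt_id x).const_mul 2
    have h1 : HasDerivAt (fun y : ℝ => Real.exp (2 * y)) (2 * Real.exp (2 * x)) x := by
      have := (Real.hasDerivAt_exp (2 * x)).comp x h0
      simpa [Function.comp_def, mul_comm] using this
    have h2 : HasDerivAt (fun y : ℝ => 1 + Real.exp (2 * y)) (2 * Real.exp (2 * x)) x :=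
      h1.const_add 1
    have h3 := h2.inv (by positivity)
    exact h3
  have hinj : InjOn F univ := by
    intro a _ b _ hab
    have h1 : (1 : ℝ) + Real.exp (2 * a) = 1 + Real.exp (2 * b) := inv_inj.mp hab
    have := Real.exp_eq_exp.mp (by linarith : Real.exp (2 * a) = Real.exp (2 * b))
    linarith
  have himg : F '' univ = Ioo (0 : ℝ) 1 := by
    rw [image_univ]
    ext v
    simp only [mem_range, mem_Ioo]
    constructor
    · rintro ⟨x, rfl⟩
      have he := Real.exp_pos (2 * x)
      constructor
      · positivity
      · rw [inv_lt_one_iff₀]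
        right; linarith
    · rintro ⟨h0, h1⟩
      refine ⟨Real.log ((1 - v) / v) / 2, ?_⟩
      have hv : (0 : ℝ) < (1 - v) / v := div_pos (by linarith) h0
      rw [hF_def]
      simp only
      rw [show 2 * (Real.log ((1 - v) / v) / 2) = Real.log ((1 - v) / v) by ring,
        Real.exp_log hv]
      have : 1 + (1 - v) / v = 1 / v := by field_simp; ring
      rw [this, one_div, inv_inv]
  have hsub := integral_image_eq_integral_abs_deriv_smul MeasurableSet.univ
    (fun x _ => (hderiv x).hasDerivWithinAt) hinj G
  rw [himg, Measure.restrict_univ] at hsub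
  have hbeta : Complex.betaIntegral (1 + s) (1 - s) = ∫ v in Ioo (0:ℝ) 1, G v := by
    rw [Complex.betaIntegral, intervalIntegral.integral_of_le zero_le_one,
      integral_Ioc_eq_integral_Ioo]
    congr 1
    ext v
    rw [hG_def]
    simp only [add_sub_cancel_left, sub_sub_cancel_left]
  have hpt : ∀ x : ℝ, |F' x| • G (F x)
      = (((1 / Real.cosh x) ^ 2 : ℝ) : ℂ) * Complex.exp (-(Complex.I * t * x)) / 2 := by
    intro x
    have he : (0 : ℝ) < 1 + Real.exp (2 * x) := by positivity
    have hex : Real.exp (2 * x) = Real.exp x * Real.exp x := by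
      rw [← Real.exp_add]; ring_nf
    have habs : |F' x| = (1 / Real.cosh x) ^ 2 / 2 := by
      have h5 : |F' x| = 2 * Real.exp (2 * x) / (1 + Real.exp (2 * x)) ^ 2 := by
        rw [hF'_def]
        simp only
        rw [abs_div, abs_neg, abs_of_pos (by positivity), abs_of_pos (by positivity)]
      rw [h5, Real.cosh_eq, hex, Real.exp_neg]
      have h6 := Real.exp_pos x
      field_simp
      ring
    have hF0 : (0 : ℝ) < F x := by rw [hF_def]; positivity
    have h1F : (1 : ℝ) - F x = Real.exp (2 * x) / (1 + Real.exp (2 * x)) := by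
      rw [hF_def]; field_simp; ring
    have h1F0 : (0 : ℝ) < 1 - F x := by rw [h1F]; positivity
    have hG1 : G (F x) = Complex.exp (-(Complex.I * t * x)) := by
      have hcast : ((1 : ℂ) - (F x : ℂ)) = ((1 - F x : ℝ) : ℂ) := by push_cast; ring
      rw [hG_def]
      simp only
      rw [hcast, aux_cpow _ hF0, aux_cpow _ h1F0, ← Complex.exp_add]
      have hlog : Real.log (F x) - Real.log (1 - F x) = -(2 * x) := by
        rw [h1F, hF_def]
        simp only
        rw [Real.log_inv, Real.log_div (Real.exp_ne_zero _) he.ne', Real.log_exp]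
        ring
      have : s * (Real.log (F x) : ℂ) + -s * (Real.log (1 - F x) : ℂ)
          = s * ((Real.log (F x) - Real.log (1 - F x) : ℝ) : ℂ) := by push_cast; ring
      rw [this, hlog, hs_def]
      congr 1
      push_cast
      ring
    rw [habs, hG1]
    rw [Complex.real_smul]
    push_cast
    ring
  calc (∫ x : ℝ, (((1 / Real.cosh x) ^ 2 : ℝ) : ℂ) * Complex.exp (-(Complex.I * t * x)))
      = ∫ x : ℝ, 2 * (|F' x| • G (F x)) := by
        congr 1; ext x; rw [hpt]; ring
    _ = 2 * ∫ x : ℝ, |F' x| • G (F x) := integral_const_mul 2 _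
    _ = 2 * ∫ v in Ioo (0:ℝ) 1, G v := by rw [← hsub]
    _ = 2 * Complex.betaIntegral (1 + s) (1 - s) := by rw [hbeta]


lemma key_beta (t : ℝ) :
    2 * Complex.betaIntegral (1 + Complex.I * t / 2) (1 - Complex.I * t / 2)
      = ((2 * Real.pi * muDen t : ℝ) : ℂ) := by
  have hπ := Real.pi_pos
  rcases eq_or_ne t 0 with rfl | ht
  · rw [muDen, if_pos rfl]
    norm_num
    rw [Complex.betaIntegral_eval_one_right (by norm_num)]
    have hπC : (↑Real.pi : ℂ) ≠ 0 := by exact_mod_cast hπ.ne'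
    field_simp
  · set s : ℂ := Complex.I * t / 2 with hs_def
    have hs : s ≠ 0 := by
      rw [hs_def]
      simp only [div_ne_zero_iff, mul_ne_zero_iff]
      exact ⟨⟨Complex.I_ne_zero, by exact_mod_cast ht⟩, by norm_num⟩
    have hs' : s = ((t / 2 : ℝ) : ℂ) * Complex.I := by rw [hs_def]; push_cast; ring
    have hre1 : 0 < (1 + s).re := by
      rw [Complex.add_re, Complex.one_re, hs']
      simp
    have hre2 : 0 < (1 - s).re := by
      rw [Complex.sub_re, Complex.one_re, hs']
      simp
    have hβ := Complex.Gamma_mul_Gamma_eq_betaIntegral hre1 hre2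
    rw [show (1 + s) + (1 - s) = 2 by ring] at hβ
    have hΓ2 : Complex.Gamma 2 = 1 := by
      rw [show (2 : ℂ) = 1 + 1 by norm_num, Complex.Gamma_add_one 1 one_ne_zero,
        Complex.Gamma_one, mul_one]
    rw [hΓ2, one_mul] at hβ
    have hβ2 : Complex.betaIntegral (1 + s) (1 - s)
        = s * (Complex.Gamma s * Complex.Gamma (1 - s)) := by
      rw [← hβ, add_comm 1 s, Complex.Gamma_add_one s hs]
      ring
    rw [Complex.Gamma_mul_Gamma_one_sub] at hβ2
    have hsin : Complex.sin (↑Real.pi * s) = (Real.sinh (Real.pi * t / 2) : ℂ) * Complex.I := by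
      rw [show (↑Real.pi : ℂ) * s = ((Real.pi * t / 2 : ℝ) : ℂ) * Complex.I by
        rw [hs_def]; push_cast; ring, Complex.sin_mul_I, Complex.ofReal_sinh]
    have h0 : Real.pi * t / 2 ≠ 0 := div_ne_zero (mul_ne_zero hπ.ne' ht) two_ne_zero
    have hsh : Real.sinh (Real.pi * t / 2) ≠ 0 :=
      fun h => h0 (Real.sinh_eq_zero.mp h)
    have hshC : ((Real.sinh (Real.pi * t / 2) : ℝ) : ℂ) ≠ 0 := by exact_mod_cast hsh
    rw [hβ2, hsin, muDen, if_neg ht, hs_def]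
    rw [show ((2 * Real.pi * (t / (2 * Real.sinh (Real.pi * t / 2))) : ℝ) : ℂ)
        = 2 * ↑Real.pi * (↑t / (2 * ((Real.sinh (Real.pi * t / 2) : ℝ) : ℂ))) by push_cast; ring]
    set S : ℂ := ((Real.sinh (Real.pi * t / 2) : ℝ) : ℂ) with hS
    field_simp [Complex.I_ne_zero]


lemma key_integral (t : ℝ) :
    (∫ x : ℝ, (((1 / Real.cosh x) ^ 2 : ℝ) : ℂ) * Complex.exp (-(Complex.I * t * x)))
      = ((2 * Real.pi * muDen t : ℝ) : ℂ) :=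
  (key_subst t).trans (key_beta t)

lemma sech_sq_cont : Continuous fun x : ℝ => (((1 / Real.cosh x) ^ 2 : ℝ) : ℂ) :=
  Complex.continuous_ofReal.comp
    (((continuous_const.div Real.continuous_cosh fun x => (Real.cosh_pos x).ne')).pow 2)

lemma sech_sq_bound (x : ℝ) : (1 / Real.cosh x) ^ 2 ≤ 4 * Real.exp (-(2 * |x|)) := by
  have h1 : Real.exp |x| / 2 ≤ Real.cosh x := by
    rw [Real.cosh_eq]
    rcases abs_cases x with ⟨h, _⟩ | ⟨h, _⟩
    · rw [h]; linarith [(Real.exp_pos (-x)).le]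
    · rw [h]; linarith [(Real.exp_pos x).le]
  have h2 : (0:ℝ) < Real.exp |x| / 2 := by positivity
  have h3 : 1 / Real.cosh x ≤ 1 / (Real.exp |x| / 2) :=
    one_div_le_one_div_of_le h2 h1
  have h4 : (0:ℝ) ≤ 1 / Real.cosh x := by positivity
  have h5 : (1 / Real.cosh x) ^ 2 ≤ (1 / (Real.exp |x| / 2)) ^ 2 :=
    pow_le_pow_left₀ h4 h3 2
  have h6 : (1 / (Real.exp |x| / 2)) ^ 2 = 4 * Real.exp (-(2 * |x|)) := by
    rw [show -(2 * |x|) = -|x| + -|x| by ring, Real.exp_add, Real.exp_neg]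
    field_simp
    ring
  linarith

lemma sech_sq_integrable : Integrable fun x : ℝ => (((1 / Real.cosh x) ^ 2 : ℝ) : ℂ) := by
  apply Integrable.mono' (((integrable_exp_neg_abs two_pos).const_mul 4))
    sech_sq_cont.aestronglyMeasurable
  filter_upwards with x
  rw [Complex.norm_real, Real.norm_eq_abs, abs_of_nonneg (by positivity)]
  exact sech_sq_bound x

lemma fourier_sech_sq :
    (𝓕 fun x : ℝ => (((1 / Real.cosh x) ^ 2 : ℝ) : ℂ))
      = fun w : ℝ => ((2 * Real.pi * muDen (2 * Real.pi * w) : ℝ) : ℂ) := by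
  funext w
  rw [Real.fourier_real_eq_integral_exp_smul]
  rw [← key_integral (2 * Real.pi * w)]
  congr 1
  funext v
  rw [smul_eq_mul, mul_comm]
  congr 1
  push_cast
  ring

lemma fourier_sech_sq_integrable :
    Integrable (𝓕 fun x : ℝ => (((1 / Real.cosh x) ^ 2 : ℝ) : ℂ)) := by
  rw [fourier_sech_sq]
  have hc : (0:ℝ) < Real.pi ^ 2 / 2 := by positivity
  apply Integrable.mono' (((integrable_exp_neg_abs hc).const_mul 4))
  · exact (Complex.measurable_ofReal.comp
      (((muDen_measurable.comp (measurable_const_mul (2 * Real.pi))).const_mul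
        (2 * Real.pi)))).aestronglyMeasurable
  · filter_upwards with w
    have hμ0 := muDen_nonneg (2 * Real.pi * w)
    have hμ1 := muDen_le (2 * Real.pi * w)
    have hπ := Real.pi_pos
    rw [Complex.norm_real, Real.norm_eq_abs, abs_of_nonneg (by positivity)]
    have habs : |2 * Real.pi * w| = 2 * Real.pi * |w| := by
      rw [abs_mul, abs_of_pos (by positivity : (0:ℝ) < 2 * Real.pi)]
    rw [habs] at hμ1
    have hexp : Real.pi / 4 * (2 * Real.pi * |w|) = Real.pi ^ 2 / 2 * |w| := by ring
    rw [hexp] at hμ1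
    calc 2 * Real.pi * muDen (2 * Real.pi * w)
        ≤ 2 * Real.pi * (2 / Real.pi * Real.exp (-(Real.pi ^ 2 / 2 * |w|))) := by
          apply mul_le_mul_of_nonneg_left hμ1 (by positivity)
      _ = 4 * Real.exp (-(Real.pi ^ 2 / 2 * |w|)) := by field_simp; ring

/-- Fourier representation: sech²(x) = ∫ μ(t)·e^{itx} dt. -/
theorem sech_sq_eq_fourier_mu (x : ℝ) :
    (∫ t : ℝ, (muDen t : ℂ) * Complex.exp (Complex.I * t * x)) =
      (((1 / Real.cosh x) ^ 2 : ℝ) : ℂ) := by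
  have hπ := Real.pi_pos
  set f : ℝ → ℂ := fun x : ℝ => (((1 / Real.cosh x) ^ 2 : ℝ) : ℂ) with hf_def
  set g : ℝ → ℂ := fun t : ℝ => (muDen t : ℂ) * Complex.exp (Complex.I * t * x) with hg_def
  have hinv : 𝓕⁻ (𝓕 f) x = f x :=
    sech_sq_integrable.fourierInv_fourier_eq fourier_sech_sq_integrable
      sech_sq_cont.continuousAt
  have hcomp := MeasureTheory.Measure.integral_comp_mul_left g (2 * Real.pi)
  have lhs_eq : 𝓕⁻ (𝓕 f) x = ∫ t : ℝ, g t := by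
    rw [Real.fourierInv_eq_fourier_neg,
      Real.fourier_real_eq_integral_exp_smul, fourier_sech_sq]
    have hpt : ∀ w : ℝ,
        Complex.exp (↑(-2 * Real.pi * w * (-x)) * Complex.I)
            • ((2 * Real.pi * muDen (2 * Real.pi * w) : ℝ) : ℂ)
          = (2 * Real.pi : ℝ) • g (2 * Real.pi * w) := by
      intro w
      rw [smul_eq_mul, Complex.real_smul, hg_def]
      simp only
      rw [mul_comm]
      push_cast
      rw [show ((-2 : ℂ) * ↑Real.pi * ↑w * (-↑x) * Complex.I)
          = Complex.I * (2 * ↑Real.pi * ↑w) * ↑x by ring]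
      ring
    calc (∫ w : ℝ, Complex.exp (↑(-2 * Real.pi * w * (-x)) * Complex.I)
            • ((2 * Real.pi * muDen (2 * Real.pi * w) : ℝ) : ℂ))
        = ∫ w : ℝ, (2 * Real.pi : ℝ) • g (2 * Real.pi * w) := by
          congr 1; funext w; exact hpt w
      _ = (2 * Real.pi : ℝ) • ∫ w : ℝ, g (2 * Real.pi * w) := integral_smul _ _
      _ = (2 * Real.pi : ℝ) • (|(2 * Real.pi : ℝ)⁻¹| • ∫ t : ℝ, g t) := by rw [hcomp]
      _ = ∫ t : ℝ, g t := by
          rw [smul_smul, abs_of_pos (by positivity), mul_inv_cancel₀ (by positivity), one_smul]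
  rw [← lhs_eq, hinv]
end
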